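/- Let b₁, b₂, b₃ be a ℚ-basis of ℚ³ and let Λ = Λ_ℚ(ℚ³) be the exterior algebra over ℚ on ℚ³. Let c₁₂, c₁₃, c₂₃, c₁₂₃ be positive integers and suppose the additive subgroup of Λ generated by {1, b₁, b₂, b₃, (1/c₁₂)·b₁∧b₂, (1/c₁₃)·b₁∧b₃, (1/c₂₃)·b₂∧b₃, (1/c₁₂₃)·b₁∧b₂∧b₃} is closed under multiplication. Then c₁₂, c₁₃ and c₂₃ each divide c₁₂₃. -/

import Mathlib

noncomputable section

/-- The exterior algebra `Λ_ℚ(ℚ³)`. -/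
abbrev Lambda3 : Type := ExteriorAlgebra ℚ (Fin 3 → ℚ)

/-- The generating set `{1, b₁, b₂, b₃, (1/c₁₂)b₁∧b₂, (1/c₁₃)b₁∧b₃, (1/c₂₃)b₂∧b₃,
(1/c₁₂₃)b₁∧b₂∧b₃}` in `Λ_ℚ(ℚ³)`, where the `bᵢ ∈ ℚ³` are viewed in `Λ` via `ι`. -/
def wSet (b : Fin 3 → (Fin 3 → ℚ)) (c12 c13 c23 c123 : ℕ) : Set Lambda3 :=
  {1, ExteriorAlgebra.ι ℚ (b 0), ExteriorAlgebra.ι ℚ (b 1), ExteriorAlgebra.ι ℚ (b 2),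
   (c12 : ℚ)⁻¹ • (ExteriorAlgebra.ι ℚ (b 0) * ExteriorAlgebra.ι ℚ (b 1)),
   (c13 : ℚ)⁻¹ • (ExteriorAlgebra.ι ℚ (b 0) * ExteriorAlgebra.ι ℚ (b 2)),
   (c23 : ℚ)⁻¹ • (ExteriorAlgebra.ι ℚ (b 1) * ExteriorAlgebra.ι ℚ (b 2)),
   (c123 : ℚ)⁻¹ •
     (ExteriorAlgebra.ι ℚ (b 0) * ExteriorAlgebra.ι ℚ (b 1) * ExteriorAlgebra.ι ℚ (b 2))}

lemma aux_dvd (c c123 : ℕ) (hc : 0 < c) (h123 : 0 < c123) (n : ℤ)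
    (h : (n : ℚ) * ((c123 : ℚ))⁻¹ = ((c : ℚ))⁻¹) : c ∣ c123 := by
  have hc' : (c : ℚ) ≠ 0 := Nat.cast_ne_zero.mpr hc.ne'
  have h123' : (c123 : ℚ) ≠ 0 := Nat.cast_ne_zero.mpr h123.ne'
  have : (n : ℚ) * c = c123 := by field_simp at h; linarith
  have hz : n * c = (c123 : ℤ) := by exact_mod_cast this
  have : (c : ℤ) ∣ (c123 : ℤ) := ⟨n, by linarith⟩
  exact_mod_cast this

set_option maxHeartbeats 1000000 in
open ExteriorAlgebra in
/-- If `b₁, b₂, b₃` is a `ℚ`-basis of `ℚ³`, the `c`'s are positive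
integers, and the additive subgroup of `Λ_ℚ(ℚ³)` generated by
`{1, b₁, b₂, b₃, (1/c₁₂)b₁∧b₂, (1/c₁₃)b₁∧b₃, (1/c₂₃)b₂∧b₃, (1/c₁₂₃)b₁∧b₂∧b₃}` is closed
under multiplication, then `c₁₂, c₁₃, c₂₃` all divide `c₁₂₃`. -/
theorem stmt13 (b : Fin 3 → (Fin 3 → ℚ))
    (hb_li : LinearIndependent ℚ b)
    (hb_sp : Submodule.span ℚ (Set.range b) = ⊤)
    (c12 c13 c23 c123 : ℕ)
    (h12 : 0 < c12) (h13 : 0 < c13) (h23 : 0 < c23) (h123 : 0 < c123)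
    (hmul : ∀ u v : Lambda3,
      u ∈ AddSubgroup.closure (wSet b c12 c13 c23 c123) →
      v ∈ AddSubgroup.closure (wSet b c12 c13 c23 c123) →
      u * v ∈ AddSubgroup.closure (wSet b c12 c13 c23 c123)) :
    c12 ∣ c123 ∧ c13 ∣ c123 ∧ c23 ∣ c123 := by
  have hsp : ⊤ ≤ Submodule.span ℚ (Set.range b) := hb_sp.ge
  set B : Module.Basis (Fin 3) ℚ (Fin 3 → ℚ) := Module.Basis.mk hb_li hsp with hB
  have hBcoe : ⇑B = b := Module.Basis.coe_mk _ _
  set f : ∀ i : ℕ, (Fin 3 → ℚ) [⋀^Fin i]→ₗ[ℚ] ℚ :=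
    Function.update (fun i => (0 : (Fin 3 → ℚ) [⋀^Fin i]→ₗ[ℚ] ℚ)) 3 B.det with hf
  have hf3 : f 3 = B.det := Function.update_self _ _ _
  have hf0 : f 0 = 0 := Function.update_of_ne (by norm_num) _ _
  have hf1 : f 1 = 0 := Function.update_of_ne (by norm_num) _ _
  have hf2 : f 2 = 0 := Function.update_of_ne (by norm_num) _ _
  set F : Lambda3 →ₗ[ℚ] ℚ := liftAlternating f with hF
  -- products as ιMulti
  have h2 : ∀ x y : Fin 3 → ℚ, ι ℚ x * ι ℚ y = ιMulti ℚ 2 ![x, y] := by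
    intro x y
    rw [ιMulti_apply]
    simp [List.ofFn_succ]
  have h3 : ∀ x y z : Fin 3 → ℚ,
      ι ℚ x * ι ℚ y * ι ℚ z = ιMulti ℚ 3 ![x, y, z] := by
    intro x y z
    rw [ιMulti_apply]
    simp [List.ofFn_succ, mul_assoc]
  have hF1 : F (1 : Lambda3) = 0 := by
    rw [hF, liftAlternating_one, hf0]; rfl
  have hFι : ∀ x : Fin 3 → ℚ, F (ι ℚ x) = 0 := by
    intro x; rw [hF, liftAlternating_ι, hf1]; rfl
  have hF2 : ∀ x y : Fin 3 → ℚ, F (ι ℚ x * ι ℚ y) = 0 := by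
    intro x y; rw [hF, h2, liftAlternating_apply_ιMulti, hf2]; rfl
  have hF3 : ∀ x y z : Fin 3 → ℚ,
      F (ι ℚ x * ι ℚ y * ι ℚ z) = B.det ![x, y, z] := by
    intro x y z; rw [hF, h3, liftAlternating_apply_ιMulti, hf3]
  have hvec : ![b 0, b 1, b 2] = b := by
    funext i; fin_cases i <;> rfl
  have hdetb : B.det ![b 0, b 1, b 2] = 1 := by
    rw [hvec, ← hBcoe]; exact B.det_self
  -- F maps the closure into zmultiples of c123⁻¹
  set T : AddSubgroup ℚ := AddSubgroup.zmultiples ((c123 : ℚ))⁻¹ with hT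
  have hle : AddSubgroup.closure (wSet b c12 c13 c23 c123) ≤
      T.comap F.toAddMonoidHom := by
    refine AddSubgroup.closure_le _ |>.mpr ?_
    intro x hx
    simp only [wSet, Set.mem_insert_iff, Set.mem_singleton_iff] at hx
    simp only [SetLike.mem_coe, AddSubgroup.mem_comap, LinearMap.toAddMonoidHom_coe]
    have hz : (0 : ℚ) ∈ T := zero_mem T
    rcases hx with h | h | h | h | h | h | h | h <;> subst h
    · rw [hF1]; exact hz
    · rw [hFι]; exact hz
    · rw [hFι]; exact hz
    · rw [hFι]; exact hz
    · rw [map_smul, hF2, smul_zero]; exact hz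
    · rw [map_smul, hF2, smul_zero]; exact hz
    · rw [map_smul, hF2, smul_zero]; exact hz
    · rw [map_smul, hF3 (b 0) (b 1) (b 2), hdetb, smul_eq_mul, mul_one]
      exact AddSubgroup.mem_zmultiples _
  have key : ∀ x : Lambda3, x ∈ AddSubgroup.closure (wSet b c12 c13 c23 c123) →
      ∃ n : ℤ, (n : ℚ) * ((c123 : ℚ))⁻¹ = F x := by
    intro x hx
    obtain ⟨n, hn⟩ := AddSubgroup.mem_zmultiples_iff.mp (hle hx)
    refine ⟨n, ?_⟩
    rw [zsmul_eq_mul] at hn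
    exact hn
  have hmem : ∀ x ∈ wSet b c12 c13 c23 c123,
      x ∈ AddSubgroup.closure (wSet b c12 c13 c23 c123) :=
    fun x hx => AddSubgroup.subset_closure hx
  have m0 : ι ℚ (b 0) ∈ AddSubgroup.closure (wSet b c12 c13 c23 c123) :=
    hmem _ (by simp [wSet])
  have m1 : ι ℚ (b 1) ∈ AddSubgroup.closure (wSet b c12 c13 c23 c123) :=
    hmem _ (by simp [wSet])
  have m2 : ι ℚ (b 2) ∈ AddSubgroup.closure (wSet b c12 c13 c23 c123) :=
    hmem _ (by simp [wSet])
  have m12 : (c12 : ℚ)⁻¹ • (ι ℚ (b 0) * ι ℚ (b 1)) ∈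
      AddSubgroup.closure (wSet b c12 c13 c23 c123) := hmem _ (by simp [wSet])
  have m13 : (c13 : ℚ)⁻¹ • (ι ℚ (b 0) * ι ℚ (b 2)) ∈
      AddSubgroup.closure (wSet b c12 c13 c23 c123) := hmem _ (by simp [wSet])
  have m23 : (c23 : ℚ)⁻¹ • (ι ℚ (b 1) * ι ℚ (b 2)) ∈
      AddSubgroup.closure (wSet b c12 c13 c23 c123) := hmem _ (by simp [wSet])
  refine ⟨?_, ?_, ?_⟩
  · obtain ⟨n, hn⟩ := key _ (hmul _ _ m12 m2)
    rw [smul_mul_assoc, map_smul, hF3, hdetb, smul_eq_mul, mul_one] at hn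
    exact aux_dvd _ _ h12 h123 n hn
  · obtain ⟨n, hn⟩ := key _ (hmul _ _ m13 m1)
    rw [smul_mul_assoc, map_smul, hF3] at hn
    have hswap : B.det ![b 0, b 2, b 1] = -1 := by
      have he : ![b 0, b 2, b 1] = ![b 0, b 1, b 2] ∘ Equiv.swap 1 2 := by
        funext i; fin_cases i <;> simp [Equiv.swap_apply_of_ne_of_ne]
      rw [he, AlternatingMap.map_swap _ _ (by decide), hdetb]
    rw [hswap, smul_eq_mul, mul_neg_one] at hn
    refine aux_dvd _ _ h13 h123 (-n) ?_
    push_cast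
    linarith
  · obtain ⟨n, hn⟩ := key _ (hmul _ _ m0 m23)
    rw [mul_smul_comm, ← mul_assoc, map_smul, hF3, hdetb, smul_eq_mul, mul_one] at hn
    exact aux_dvd _ _ h23 h123 n hn

end
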